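/- Let K be a bounded linear operator on H with Moore–Penrose pseudoinverse P, and let F = (f_1,…,f_N) be a Parseval K-frame for H. Set L = max_{1≤i≤N} ‖f_i‖·‖P f_i‖ and Λ₁ = { i : ‖f_i‖·‖P f_i‖ = L }. Suppose the family { f_i : i ∈ Λ₁ } is linearly independent and there exist scalars c_1,…,c_N with c_i ≠ 0 for all i ∈ Λ₁ such that ∑_{i=1}^N c_i f_i = 0. Then there exists a K-dual G = (g_1,…,g_N) of F with max_{1≤i≤N} ‖f_i‖·‖g_i‖ < L (so the canonical K-dual is not optimal for one erasure under the operator norm). -/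

import Mathlib

local notation "⟪" x ", " y "⟫" => @inner ℂ _ _ x y

private lemma stmt14_aux1 (x y tt cc uu : ℝ) (htpos : 0 < tt) (hcpos : 0 < cc)
    (htu : tt * uu ^ 2 ≤ 1)
    (hsq : x ^ 2 = y ^ 2 - 2 * (tt * cc ^ 2) + (tt * cc * uu) ^ 2) :
    x ^ 2 < y ^ 2 := by
  have h1 : 0 < tt * cc ^ 2 := mul_pos htpos (pow_pos hcpos 2)
  have h2 : (tt * cc ^ 2) * (tt * uu ^ 2) ≤ (tt * cc ^ 2) * 1 :=
    mul_le_mul_of_nonneg_left htu h1.le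
  nlinarith [h1, h2]

private lemma stmt14_aux2 (x y l tt b : ℝ) (hx : x ≤ y + tt * b)
    (htb : tt * (b + 1) ≤ l - y) (htpos : 0 < tt) (hbnn : 0 ≤ b) :
    x < l := by nlinarith

/-- Let `K` be a bounded operator on `H` with Moore–Penrose pseudoinverse `P`
and `F` a Parseval `K`-frame.  With `L = max_i ‖f_i‖·‖P f_i‖` and `Λ₁` the set of indices
attaining `L`: if `{f_i : i ∈ Λ₁}` is linearly independent and there are scalars `c_i`,
nonzero for all `i ∈ Λ₁`, with `∑ c_i f_i = 0`, then some `K`-dual `G` of `F` satisfies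
`max_i ‖f_i‖·‖g_i‖ < L` (so the canonical `K`-dual is not 1-erasure optimal). -/
theorem stmt14
    {H : Type*} [NormedAddCommGroup H] [InnerProductSpace ℂ H] [FiniteDimensional ℂ H]
    (hdim : 1 ≤ Module.finrank ℂ H)
    {N : ℕ} (hN : 1 ≤ N)
    (K P : H →L[ℂ] H)
    (hP1 : K ∘L P ∘L K = K) (hP2 : P ∘L K ∘L P = P)
    (hP3 : IsSelfAdjoint (K ∘L P)) (hP4 : IsSelfAdjoint (P ∘L K))
    (F : Fin N → H)
    (hParseval : ∀ f : H,
      ∑ i, ‖⟪F i, f⟫‖ ^ 2 = ‖ContinuousLinearMap.adjoint K f‖ ^ 2)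
    (L : ℝ) (hL : L = ⨆ i, ‖F i‖ * ‖P (F i)‖)
    (hind : LinearIndependent ℂ (fun i : {i : Fin N // ‖F i‖ * ‖P (F i)‖ = L} => F i.1))
    (c : Fin N → ℂ)
    (hc : ∀ i, ‖F i‖ * ‖P (F i)‖ = L → c i ≠ 0)
    (hsum : ∑ i, c i • F i = 0) :
    ∃ G : Fin N → H, (∀ f : H, K f = ∑ i, ⟪G i, f⟫ • F i) ∧
      (⨆ i, ‖F i‖ * ‖G i‖) < L := by
  classical
  haveI : Nonempty (Fin N) := ⟨⟨0, hN⟩⟩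
  set K' := ContinuousLinearMap.adjoint K with hK'def
  -- Step 1: the operator identity  ∑ ⟪F i, g⟫ • F i = K (K* g)
  have hS : ∀ g : H, ∑ i, ⟪F i, g⟫ • F i = K (K' g) := by
    have key : ((∑ i, (innerSL ℂ (F i)).smulRight (F i) : H →L[ℂ] H) : H →ₗ[ℂ] H)
        = ((K ∘L K' : H →L[ℂ] H) : H →ₗ[ℂ] H) := by
      rw [← ext_inner_map]
      intro x
      have hl : ((∑ i, (innerSL ℂ (F i)).smulRight (F i) : H →L[ℂ] H) : H →ₗ[ℂ] H) x
          = ∑ i, ⟪F i, x⟫ • F i := by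
        simp [ContinuousLinearMap.sum_apply]
      have hr : ((K ∘L K' : H →L[ℂ] H) : H →ₗ[ℂ] H) x = K (K' x) := rfl
      rw [hl, hr]
      rw [sum_inner]
      have h1 : ∀ i, ⟪(⟪F i, x⟫ : ℂ) • F i, x⟫ = ((‖⟪F i, x⟫‖ : ℝ) : ℂ) ^ 2 := by
        intro i
        rw [inner_smul_left]
        rw [RCLike.conj_mul]
        norm_cast
      have h2 : ⟪K (K' x), x⟫ = ((‖K' x‖ : ℝ) : ℂ) ^ 2 := by
        have : K (K' x) = ContinuousLinearMap.adjoint K' (K' x) := by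
          rw [hK'def, ContinuousLinearMap.adjoint_adjoint]
        rw [this, ContinuousLinearMap.adjoint_inner_left, hK'def]
        exact_mod_cast inner_self_eq_norm_sq_to_K (𝕜 := ℂ) _
      rw [h2]
      calc ∑ i, ⟪(⟪F i, x⟫ : ℂ) • F i, x⟫
          = ∑ i, ((‖⟪F i, x⟫‖ : ℝ) : ℂ) ^ 2 := by
            exact Finset.sum_congr rfl fun i _ => h1 i
        _ = ((‖K' x‖ : ℝ) : ℂ) ^ 2 := by
            have := hParseval x
            push_cast
            exact_mod_cast congrArg (fun r : ℝ => (r : ℂ)) this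
    intro g
    have := congrArg (fun T : H →ₗ[ℂ] H => T g) key
    simpa [ContinuousLinearMap.sum_apply] using this
  -- Step 2: K (P (F i)) = F i
  have hQsa : ContinuousLinearMap.adjoint (K ∘L P) = K ∘L P :=
    ContinuousLinearMap.isSelfAdjoint_iff'.mp hP3
  have hQK : (K ∘L P) ∘L K = K := by
    rw [ContinuousLinearMap.comp_assoc]; exact hP1
  have hK'Q : K' ∘L (K ∘L P) = K' := by
    have := congrArg ContinuousLinearMap.adjoint hQK
    rwa [ContinuousLinearMap.adjoint_comp, hQsa] at this
  have hQidem : ∀ x, (K ∘L P) ((K ∘L P) x) = (K ∘L P) x := by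
    intro x
    have : (K ∘L P) ∘L (K ∘L P) = K ∘L P := by
      rw [← ContinuousLinearMap.comp_assoc, ContinuousLinearMap.comp_assoc K P K, hP1]
    exact congrArg (fun T : H →L[ℂ] H => T x) this
  have hFperp : ∀ (i : Fin N) (z : H), K' z = 0 → ⟪F i, z⟫ = 0 := by
    intro i z hz
    have h0 : ∑ j, ‖⟪F j, z⟫‖ ^ 2 = 0 := by
      rw [hParseval z, hz, norm_zero]; ring
    have hall : ∀ j ∈ Finset.univ, ‖⟪F j, z⟫‖ ^ 2 = 0 := by
      intro j _
      have := (Finset.sum_eq_zero_iff_of_nonneg (fun j _ => by positivity)).mp h0 j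
        (Finset.mem_univ j)
      exact this
    have := hall i (Finset.mem_univ i)
    have habs : ‖⟪F i, z⟫‖ = 0 := by
      nlinarith [norm_nonneg (⟪F i, z⟫ : ℂ)]
    exact norm_eq_zero.mp habs
  have hKP : ∀ i, K (P (F i)) = F i := by
    intro i
    set v := F i - (K ∘L P) (F i) with hv
    have hK'v : K' v = 0 := by
      rw [hv, map_sub]
      have : K' ((K ∘L P) (F i)) = K' (F i) :=
        congrArg (fun T : H →L[ℂ] H => T (F i)) hK'Q
      rw [this, sub_self]
    have h1 : ⟪F i, v⟫ = 0 := hFperp i v hK'v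
    have h2 : ⟪(K ∘L P) (F i), v⟫ = 0 := by
      rw [← hQsa, ContinuousLinearMap.adjoint_inner_left]
      have : (K ∘L P) v = 0 := by
        rw [hv, map_sub, hQidem, sub_self]
      rw [this, inner_zero_right]
    have hvv : ⟪v, v⟫ = 0 := by
      rw [hv]
      rw [inner_sub_left, ← hv, h1, h2, sub_zero]
    have : v = 0 := inner_self_eq_zero.mp hvv
    have := sub_eq_zero.mp (hv ▸ this)
    exact this.symm
  -- Step 3: canonical dual property
  have hK'P' : K' ∘L ContinuousLinearMap.adjoint P = P ∘L K := by
    have := ContinuousLinearMap.isSelfAdjoint_iff'.mp hP4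
    rwa [ContinuousLinearMap.adjoint_comp] at this
  have hCan : ∀ f : H, K f = ∑ i, ⟪P (F i), f⟫ • F i := by
    intro f
    have h1 : ∀ i, (⟪P (F i), f⟫ : ℂ) = ⟪F i, ContinuousLinearMap.adjoint P f⟫ :=
      fun i => (ContinuousLinearMap.adjoint_inner_right P (F i) f).symm
    calc K f = K ((P ∘L K) f) := by
            conv_lhs => rw [← hP1]
            rfl
      _ = K (K' (ContinuousLinearMap.adjoint P f)) := by
            rw [← hK'P']; rfl
      _ = ∑ i, ⟪F i, ContinuousLinearMap.adjoint P f⟫ • F i := (hS _).symm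
      _ = ∑ i, ⟪P (F i), f⟫ • F i := by
            exact Finset.sum_congr rfl fun i _ => by rw [h1 i]
  -- Step 4: basic facts on L
  set ψ : Fin N → ℝ := fun i => ‖F i‖ * ‖P (F i)‖ with hψdef
  obtain ⟨i₀, hi₀⟩ := Finite.exists_max ψ
  have hbdd : BddAbove (Set.range ψ) := Set.Finite.bddAbove (Set.finite_range ψ)
  have hLmax : L = ψ i₀ :=
    le_antisymm (hL ▸ ciSup_le hi₀) (hL ▸ le_ciSup hbdd i₀)
  have hle : ∀ i, ψ i ≤ L := fun i => hL ▸ le_ciSup hbdd i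
  have hψnn : ∀ i, 0 ≤ ψ i := fun i => mul_nonneg (norm_nonneg _) (norm_nonneg _)
  have hLnn : 0 ≤ L := le_trans (hψnn i₀) (le_of_eq hLmax.symm)
  -- nonzero coefficients on the subtype
  have hLpos : 0 < L := by
    rcases lt_or_eq_of_le hLnn with h | h
    · exact h
    · exfalso
      have hall : ∀ i, ψ i = L := by
        intro i
        exact le_antisymm (hle i) (by rw [← h]; exact hψnn i)
      have hzero : ∀ j : {i : Fin N // ‖F i‖ * ‖P (F i)‖ = L},
          (fun j : {i : Fin N // ‖F i‖ * ‖P (F i)‖ = L} => c j.1) j = 0 := by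
        apply Fintype.linearIndependent_iff.mp hind
        rw [show (∑ j : {i : Fin N // ‖F i‖ * ‖P (F i)‖ = L}, c j.1 • F j.1)
            = ∑ i : Fin N, c i • F i from
          Fintype.sum_equiv (Equiv.subtypeUnivEquiv hall) _ _ (fun j => rfl)]
        exact hsum
      exact hc ⟨0, hN⟩ (hall _) (hzero ⟨⟨0, hN⟩, hall _⟩)
  -- Step 5: linear independence of the P (F i) on Λ₁, and choice of u
  have hPind : ∀ a : {i : Fin N // ‖F i‖ * ‖P (F i)‖ = L} → ℂ,
      (∑ j, a j • P (F j.1)) = 0 → ∀ j, a j = 0 := by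
    intro a ha
    apply Fintype.linearIndependent_iff.mp hind
    have := congrArg K ha
    rw [map_sum, map_zero] at this
    simpa [hKP] using this
  set ι := {i : Fin N // ‖F i‖ * ‖P (F i)‖ = L} with hιdef
  have hu : ∃ u : H, ∀ j : ι, ⟪P (F j.1), u⟫ = -(c j.1) := by
    let B : (ι → ℂ) →ₗ[ℂ] (ι → ℂ) :=
      { toFun := fun a => fun j => ⟪P (F j.1), ∑ i, a i • P (F i.1)⟫
        map_add' := by
          intro a b
          funext j
          simp [add_smul, Finset.sum_add_distrib, inner_add_right]
        map_smul' := by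
          intro r a
          funext j
          simp only [Pi.smul_apply, smul_eq_mul, mul_smul, ← Finset.smul_sum,
            inner_smul_right, RingHom.id_apply] }
    have hBinj : Function.Injective B := by
      rw [injective_iff_map_eq_zero]
      intro a ha
      have hz : ∀ j : ι, ⟪P (F j.1), ∑ i, a i • P (F i.1)⟫ = 0 := by
        intro j; exact congrFun ha j
      have hsum0 : (∑ i : ι, a i • P (F i.1)) = 0 := by
        have : ⟪∑ i : ι, a i • P (F i.1), ∑ i : ι, a i • P (F i.1)⟫ = 0 := by
          rw [sum_inner]
          apply Finset.sum_eq_zero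
          intro j _
          rw [inner_smul_left, hz j, mul_zero]
        exact inner_self_eq_zero.mp this
      funext j
      exact hPind a hsum0 j
    have hBsurj : Function.Surjective B := (LinearMap.injective_iff_surjective).mp hBinj
    obtain ⟨a, ha⟩ := hBsurj (fun j => -(c j.1))
    exact ⟨∑ i : ι, a i • P (F i.1), fun j => by
      have := congrFun ha j
      exact this⟩
  obtain ⟨u, hu⟩ := hu
  have hj₀ : (‖F i₀‖ * ‖P (F i₀)‖ = L) := hLmax.symm
  have hunz : u ≠ 0 := by
    intro h0
    have h1 := hu ⟨i₀, hj₀⟩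
    rw [h0, inner_zero_right] at h1
    exact hc i₀ hj₀ (neg_eq_zero.mp h1.symm)
  have hupos : 0 < ‖u‖ := norm_pos_iff.mpr hunz
  -- Step 6: choice of t
  set δ : Fin N → ℝ := fun i =>
    if ψ i = L then 1 else (L - ψ i) / (‖F i‖ * ‖c i‖ * ‖u‖ + 1) with hδdef
  have hδpos : ∀ i, 0 < δ i := by
    intro i
    rw [hδdef]
    by_cases h : ψ i = L
    · simp [h]
    · simp only [h, if_false]
      apply div_pos
      · exact sub_pos.mpr (lt_of_le_of_ne (hle i) h)
      · positivity
  set t : ℝ := min (1 / ‖u‖ ^ 2) ((Finset.univ : Finset (Fin N)).inf' ⟨⟨0, hN⟩,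
    Finset.mem_univ _⟩ δ) with htdef
  have htpos : 0 < t := by
    apply lt_min
    · positivity
    · refine (Finset.lt_inf'_iff _).2 ?_
      intro i _
      exact hδpos i
  have htu : t * ‖u‖ ^ 2 ≤ 1 := by
    have h1 : t ≤ 1 / ‖u‖ ^ 2 := min_le_left _ _
    rw [div_eq_mul_inv, one_mul] at h1
    calc t * ‖u‖ ^ 2 ≤ (‖u‖ ^ 2)⁻¹ * ‖u‖ ^ 2 := by
          apply mul_le_mul_of_nonneg_right h1 (by positivity)
      _ = 1 := by field_simp
  have htδ : ∀ i, t ≤ δ i := fun i =>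
    le_trans (min_le_right _ _) (Finset.inf'_le δ (Finset.mem_univ i))
  clear_value t
  clear htdef
  -- the perturbed dual
  set G : Fin N → H := fun i => P (F i) + ((t : ℂ) * (starRingEnd ℂ) (c i)) • u with hGdef
  refine ⟨G, ?_, ?_⟩
  · -- duality
    intro f
    rw [hCan f]
    have hterm : ∀ i, (⟪G i, f⟫ : ℂ) • F i
        = ⟪P (F i), f⟫ • F i + ((t : ℂ) * ⟪u, f⟫) • (c i • F i) := by
      intro i
      have hGi : G i = P (F i) + ((t : ℂ) * (starRingEnd ℂ) (c i)) • u := rfl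
      have hcoef : (starRingEnd ℂ) ((t : ℂ) * (starRingEnd ℂ) (c i)) * ⟪u, f⟫
          = ((t : ℂ) * ⟪u, f⟫) * c i := by
        rw [map_mul, Complex.conj_conj, Complex.conj_ofReal]
        ring
      rw [hGi]
      rw [inner_add_left, inner_smul_left, add_smul, hcoef, mul_smul]
    have hsplit : ∑ i, (⟪G i, f⟫ : ℂ) • F i
        = (∑ i, ⟪P (F i), f⟫ • F i) + ((t : ℂ) * ⟪u, f⟫) • ∑ i, c i • F i := by
      rw [Finset.smul_sum, ← Finset.sum_add_distrib]
      exact Finset.sum_congr rfl fun i _ => hterm i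
    rw [hsplit, hsum, smul_zero, add_zero]
  · -- norm bound
    have hbound : ∀ i, ‖F i‖ * ‖G i‖ < L := by
      intro i
      by_cases hmem : ψ i = L
      · -- index attaining the max
        have hcu : ⟪P (F i), u⟫ = -(c i) := hu ⟨i, hmem⟩
        have hcnz : c i ≠ 0 := hc i hmem
        have hcpos : 0 < ‖c i‖ := norm_pos_iff.mpr hcnz
        have hFpos : 0 < ‖F i‖ := by
          rcases (norm_nonneg (F i)).lt_or_eq with h | h
          · exact h
          · exfalso
            have hmem' : ‖F i‖ * ‖P (F i)‖ = L := hmem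
            rw [← h, zero_mul] at hmem'
            exact absurd hmem'.symm (ne_of_gt hLpos)
        have hre : RCLike.re (⟪P (F i), ((t : ℂ) * (starRingEnd ℂ) (c i)) • u⟫ : ℂ)
            = -(t * ‖c i‖ ^ 2) := by
          rw [inner_smul_right, hcu]
          have heq : (t : ℂ) * (starRingEnd ℂ) (c i) * -(c i)
              = ((-(t * ‖c i‖ ^ 2) : ℝ) : ℂ) := by
            have h2 : (starRingEnd ℂ) (c i) * (c i) = (((‖c i‖ ^ 2 : ℝ)) : ℂ) := by
              exact_mod_cast RCLike.conj_mul (c i)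
            rw [show (t : ℂ) * (starRingEnd ℂ) (c i) * -(c i)
                = -((t : ℂ) * ((starRingEnd ℂ) (c i) * (c i))) from by ring, h2]
            push_cast
            ring
          rw [heq]
          exact RCLike.ofReal_re _
        have hwn : ‖((t : ℂ) * (starRingEnd ℂ) (c i)) • u‖ = t * ‖c i‖ * ‖u‖ := by
          rw [norm_smul, norm_mul, Complex.norm_real, RCLike.norm_conj,
            Real.norm_eq_abs, abs_of_pos htpos]
        have hsq : ‖G i‖ ^ 2 = ‖P (F i)‖ ^ 2 - 2 * (t * ‖c i‖ ^ 2)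
            + (t * ‖c i‖ * ‖u‖) ^ 2 := by
          have hGi : G i = P (F i) + ((t : ℂ) * (starRingEnd ℂ) (c i)) • u := rfl
          rw [hGi, norm_add_sq (𝕜 := ℂ), hre, hwn]
          ring
        have hlt : ‖G i‖ ^ 2 < ‖P (F i)‖ ^ 2 :=
          stmt14_aux1 _ _ t (‖c i‖) (‖u‖) htpos hcpos htu hsq
        have : ‖G i‖ < ‖P (F i)‖ :=
          lt_of_pow_lt_pow_left₀ 2 (norm_nonneg _) hlt
        calc ‖F i‖ * ‖G i‖ < ‖F i‖ * ‖P (F i)‖ := by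
              exact mul_lt_mul_of_pos_left this hFpos
          _ = L := hmem
      · -- non-maximal index
        have hlt : ψ i < L := lt_of_le_of_ne (hle i) hmem
        have hδi : δ i = (L - ψ i) / (‖F i‖ * ‖c i‖ * ‖u‖ + 1) := by
          rw [hδdef]; simp [hmem]
        set b : ℝ := ‖F i‖ * ‖c i‖ * ‖u‖ with hbdef
        have hbnn : 0 ≤ b := by positivity
        have htb : t * (b + 1) ≤ L - ψ i := by
          have h1 : t ≤ (L - ψ i) / (b + 1) := by
            rw [← hδi]; exact htδ i
          rw [le_div_iff₀ (by positivity)] at h1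
          exact h1
        have hGle : ‖G i‖ ≤ ‖P (F i)‖ + t * ‖c i‖ * ‖u‖ := by
          have hGi : G i = P (F i) + ((t : ℂ) * (starRingEnd ℂ) (c i)) • u := rfl
          rw [hGi]
          refine le_trans (norm_add_le _ _) ?_
          rw [norm_smul, norm_mul, Complex.norm_real, RCLike.norm_conj,
            Real.norm_eq_abs, abs_of_pos htpos]
        have : ‖F i‖ * ‖G i‖ ≤ ψ i + t * b := by
          rw [hψdef, hbdef]
          simp only
          calc ‖F i‖ * ‖G i‖ ≤ ‖F i‖ * (‖P (F i)‖ + t * ‖c i‖ * ‖u‖) :=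
                mul_le_mul_of_nonneg_left hGle (norm_nonneg _)
            _ = ‖F i‖ * ‖P (F i)‖ + t * (‖F i‖ * ‖c i‖ * ‖u‖) := by ring
        exact stmt14_aux2 _ _ _ _ _ this htb htpos hbnn
    obtain ⟨i₁, hi₁⟩ := Finite.exists_max (fun i => ‖F i‖ * ‖G i‖)
    calc (⨆ i, ‖F i‖ * ‖G i‖) ≤ ‖F i₁‖ * ‖G i₁‖ := ciSup_le hi₁
      _ < L := hbound i₁
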